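/- For every nonnegative integers n and ℓ and every real t with 0 < t ≤ 1, one has P_ℓ^{(n,0)}(2t² − 1) = (2·ℓ!·n!)/(π·(ℓ+n)!) · ∫_0^1 C_{2ℓ}^{(n+1)}(tv)/√(1 − v²) dv. -/

import Mathlib

open Real MeasureTheory

/-- Generalized binomial coefficient `C(a, j) = a(a-1)⋯(a-j+1)/j!`. -/
noncomputable def genBinom (a : ℝ) (j : ℕ) : ℝ :=
  (∏ i ∈ Finset.range j, (a - i)) / (Nat.factorial j)

/-- Jacobi polynomial `P_ℓ^{(α,β)}(x)`. -/
noncomputable def jacobiP (α β : ℝ) (l : ℕ) (x : ℝ) : ℝ :=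
  ∑ k ∈ Finset.range (l + 1),
    genBinom ((l : ℝ) + α) (l - k) * genBinom ((l : ℝ) + β) k *
      ((x - 1) / 2) ^ k * ((x + 1) / 2) ^ (l - k)

/-- Gegenbauer (ultraspherical) polynomial `C_m^{(λ)}(x)`. -/
noncomputable def gegenbauerC (m : ℕ) (lam : ℝ) (x : ℝ) : ℝ :=
  ∑ k ∈ Finset.range (m / 2 + 1),
    (-1 : ℝ) ^ k *
      (Real.Gamma (lam + m - k) /
        (Real.Gamma lam * (Nat.factorial k) * (Nat.factorial (m - 2 * k)))) *
      (2 * x) ^ (m - 2 * k)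

/-- Pochhammer symbol `(q)_k = q(q+1)⋯(q+k-1)`. -/
noncomputable def poch (q : ℝ) (k : ℕ) : ℝ := ∏ i ∈ Finset.range k, (q + i)

/-- Terminating Gauss hypergeometric function `₂F₁(-m, b; c; z)`. -/
noncomputable def hyp2F1 (m : ℕ) (b c z : ℝ) : ℝ :=
  ∑ k ∈ Finset.range (m + 1),
    poch (-(m : ℝ)) k * poch b k / (poch c k * (Nat.factorial k)) * z ^ k

/-- The operator `(Df)(u) = -(1/sin u) f'(u)`. -/
noncomputable def Dop (f : ℝ → ℝ) : ℝ → ℝ := fun u => -(1 / Real.sin u) * deriv f u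

section Aux

open Finset intervalIntegral Set

lemma genBinom_natCast (N j : ℕ) (h : j ≤ N) : genBinom (N : ℝ) j = (N.choose j : ℝ) := by
  have hp : (∏ i ∈ Finset.range j, ((N : ℝ) - i)) = ((N.descFactorial j : ℕ) : ℝ) := by
    rw [Nat.descFactorial_eq_prod_range]
    push_cast
    refine Finset.prod_congr rfl fun i hi => ?_
    rw [Nat.cast_sub (le_of_lt (lt_of_lt_of_le (Finset.mem_range.mp hi) h))]
  rw [genBinom, hp, Nat.descFactorial_eq_factorial_mul_choose]
  push_cast
  rw [mul_comm, mul_div_assoc, div_self (by positivity), mul_one]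

lemma tri (i k l : ℕ) (h1 : i ≤ k) (h2 : k ≤ l) :
    l.choose k * k.choose i = l.choose i * (l - i).choose (k - i) := by
  have key : l.choose k * k.choose i * (i.factorial * (k - i).factorial * (l - k).factorial)
      = l.choose i * (l - i).choose (k - i) * (i.factorial * (k - i).factorial * (l - k).factorial) := by
    have e1 : k.choose i * i.factorial * (k - i).factorial = k.factorial :=
      Nat.choose_mul_factorial_mul_factorial h1
    have e2 : l.choose k * k.factorial * (l - k).factorial = l.factorial :=
      Nat.choose_mul_factorial_mul_factorial h2
    have e3 : (l - i).choose (k - i) * (k - i).factorial * ((l - i) - (k - i)).factorial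
        = (l - i).factorial := Nat.choose_mul_factorial_mul_factorial (by omega)
    have e4 : l.choose i * i.factorial * (l - i).factorial = l.factorial :=
      Nat.choose_mul_factorial_mul_factorial (h1.trans h2)
    have e5 : (l - i) - (k - i) = l - k := by omega
    rw [e5] at e3
    calc l.choose k * k.choose i * (i.factorial * (k - i).factorial * (l - k).factorial)
        = l.choose k * (k.choose i * i.factorial * (k - i).factorial) * (l - k).factorial := by ring
      _ = l.choose k * k.factorial * (l - k).factorial := by rw [e1]
      _ = l.factorial := e2
      _ = l.choose i * i.factorial * (l - i).factorial := e4.symm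
      _ = l.choose i * i.factorial
          * ((l - i).choose (k - i) * (k - i).factorial * (l - k).factorial) := by rw [e3]
      _ = _ := by ring
  exact Nat.eq_of_mul_eq_mul_right (by positivity) key

lemma vdm (a b M : ℕ) : (a + b).choose M = ∑ r ∈ range (M + 1), a.choose (M - r) * b.choose r := by
  rw [Nat.add_choose_eq, Finset.Nat.sum_antidiagonal_eq_sum_range_succ_mk]
  rw [← Finset.sum_range_reflect]
  refine Finset.sum_congr rfl fun r hr => ?_
  have hr' : r ≤ M := by simpa [Nat.lt_succ_iff] using hr
  congr 2
  all_goals omega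

lemma jacobiInnerSum (n l i : ℕ) (hi : i ≤ l) :
    ∑ k ∈ Finset.Ico i (l+1), (l+n).choose (l-k) * (l.choose k * k.choose i)
      = l.choose i * (2*l+n-i).choose (l-i) := by
  have step1 : ∀ k ∈ Finset.Ico i (l+1),
      (l+n).choose (l-k) * (l.choose k * k.choose i)
        = l.choose i * ((l+n).choose (l-k) * (l-i).choose (k-i)) := by
    intro k hk
    obtain ⟨hik, hkl⟩ := Finset.mem_Ico.mp hk
    rw [tri i k l hik (by omega)]
    ring
  rw [Finset.sum_congr rfl step1, ← Finset.mul_sum]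
  congr 1
  rw [Finset.sum_Ico_eq_sum_range]
  have h1 : l + 1 - i = (l - i) + 1 := by omega
  rw [h1]
  have h2 : 2*l+n-i = (l+n) + (l-i) := by omega
  rw [h2, vdm]
  refine Finset.sum_congr rfl fun r hr => ?_
  have hr' : r ≤ l - i := by simpa [Nat.lt_succ_iff] using hr
  congr 2
  all_goals omega

lemma combin (n l : ℕ) (s : ℝ) :
    ∑ k ∈ range (l+1), ((l+n).choose (l-k) : ℝ) * (l.choose k : ℝ) * (s-1)^k * s^(l-k)
      = ∑ i ∈ range (l+1), (-1:ℝ)^i * (l.choose i : ℝ) * ((2*l+n-i).choose (l-i) : ℝ) * s^(l-i) := by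
  have expand : ∀ k ∈ range (l+1),
      ((l+n).choose (l-k) : ℝ) * (l.choose k : ℝ) * (s-1)^k * s^(l-k)
        = ∑ i ∈ range (k+1),
            (-1:ℝ)^i * (((l+n).choose (l-k) : ℝ) * (l.choose k : ℝ) * (k.choose i : ℝ)) * s^(l-i) := by
    intro k hk
    have hkl : k ≤ l := by simpa [Nat.lt_succ_iff] using hk
    have hsub : (s - 1)^k = ∑ i ∈ range (k+1), (-1:ℝ)^i * s^(k-i) * (k.choose i : ℝ) := by
      have := add_pow (-1 : ℝ) s k
      rw [show (-1 : ℝ) + s = s - 1 by ring] at this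
      rw [this]
    rw [hsub, Finset.mul_sum, Finset.sum_mul]
    refine Finset.sum_congr rfl fun i hi => ?_
    have hik : i ≤ k := by simpa [Nat.lt_succ_iff] using hi
    have hpow : s^(k-i) * s^(l-k) = s^(l-i) := by
      rw [← pow_add]; congr 1; omega
    calc ((l+n).choose (l-k) : ℝ) * (l.choose k : ℝ) * ((-1:ℝ)^i * s^(k-i) * (k.choose i : ℝ)) * s^(l-k)
        = (-1:ℝ)^i * (((l+n).choose (l-k) : ℝ) * (l.choose k : ℝ) * (k.choose i : ℝ))
            * (s^(k-i) * s^(l-k)) := by ring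
      _ = _ := by rw [hpow]
  rw [Finset.sum_congr rfl expand]
  have swap : ∑ k ∈ range (l+1), ∑ i ∈ range (k+1),
        (-1:ℝ)^i * (((l+n).choose (l-k) : ℝ) * (l.choose k : ℝ) * (k.choose i : ℝ)) * s^(l-i)
      = ∑ i ∈ range (l+1), ∑ k ∈ Finset.Ico i (l+1),
        (-1:ℝ)^i * (((l+n).choose (l-k) : ℝ) * (l.choose k : ℝ) * (k.choose i : ℝ)) * s^(l-i) := by
    simp only [Finset.range_eq_Ico]
    rw [← Finset.sum_Ico_Ico_comm]
  rw [swap]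
  refine Finset.sum_congr rfl fun i hi => ?_
  have hil : i ≤ l := by simpa [Nat.lt_succ_iff] using hi
  have key : ∑ k ∈ Finset.Ico i (l+1),
        (-1:ℝ)^i * (((l+n).choose (l-k) : ℝ) * (l.choose k : ℝ) * (k.choose i : ℝ)) * s^(l-i)
      = (-1:ℝ)^i * ((∑ k ∈ Finset.Ico i (l+1),
          (l+n).choose (l-k) * (l.choose k * k.choose i) : ℕ) : ℝ) * s^(l-i) := by
    rw [Nat.cast_sum, Finset.mul_sum, Finset.sum_mul]
    refine Finset.sum_congr rfl fun k _ => ?_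
    push_cast
    ring
  rw [key, jacobiInnerSum n l i hil]
  push_cast
  ring

lemma wallis (j : ℕ) :
    (∫ x in (0:ℝ)..(π/2), sin x ^ (2*j)) = π/2 * ((2*j).choose j : ℝ) / 4^j := by
  induction j with
  | zero => simp
  | succ j ih =>
    have h2 : 2 * (j + 1) = 2 * j + 2 := by ring
    rw [h2, integral_sin_pow, ih, Real.sin_zero, Real.sin_pi_div_two, Real.cos_pi_div_two]
    have hcb : ((2*j+2).choose (j+1) : ℝ) * ((j:ℝ)+1) = 2 * (2*(j:ℝ)+1) * ((2*j).choose j : ℝ) := by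
      have h' : (j+1) * (2*(j+1)).choose (j+1) = 2 * (2*j+1) * (2*j).choose j := by
        simpa [Nat.centralBinom] using Nat.succ_mul_centralBinom_succ j
      rw [h2] at h'
      exact_mod_cast congrArg (Nat.cast (R := ℝ)) ((mul_comm _ _).trans h')
    have hjj : ((j:ℝ)+1) ≠ 0 := by positivity
    have h4j : (4:ℝ)^j ≠ 0 := by positivity
    push_cast
    field_simp
    ring_nf
    ring_nf at hcb
    linear_combination (-(2 * π * 4^j)) * hcb

lemma sin_image : Real.sin '' Set.Ioo 0 (π/2) = Set.Ioo (0:ℝ) 1 := by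
  ext v
  constructor
  · rintro ⟨θ, ⟨h1, h2⟩, rfl⟩
    refine ⟨Real.sin_pos_of_pos_of_lt_pi h1 (h2.trans (by linarith [pi_pos])), ?_⟩
    have := Real.strictMonoOn_sin (a := θ) (b := π/2) ⟨by linarith, by linarith⟩
      ⟨by linarith [pi_pos], le_refl _⟩ h2
    simpa using this
  · rintro ⟨h1, h2⟩
    exact ⟨Real.arcsin v, ⟨Real.arcsin_pos.mpr h1, Real.arcsin_lt_pi_div_two.mpr h2⟩,
      Real.sin_arcsin (by linarith) (by linarith)⟩

lemma subst_sin (f : ℝ → ℝ) :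
    (∫ v in (0:ℝ)..1, f v / Real.sqrt (1 - v^2)) = ∫ x in (0:ℝ)..(π/2), f (Real.sin x) := by
  have hpi : (0:ℝ) < π/2 := by positivity
  rw [intervalIntegral.integral_of_le (by norm_num : (0:ℝ) ≤ 1),
      intervalIntegral.integral_of_le hpi.le,
      MeasureTheory.integral_Ioc_eq_integral_Ioo,
      MeasureTheory.integral_Ioc_eq_integral_Ioo, ← sin_image,
      MeasureTheory.integral_image_eq_integral_abs_deriv_smul measurableSet_Ioo
        (fun x _ => (Real.hasDerivAt_sin x).hasDerivWithinAt)
        (Real.injOn_sin.mono (fun x hx => Set.mem_Icc.mpr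
          ⟨by linarith [(Set.mem_Ioo.mp hx).1, pi_pos], le_of_lt (Set.mem_Ioo.mp hx).2⟩))]
  refine MeasureTheory.setIntegral_congr_fun measurableSet_Ioo (fun x hx => ?_)
  obtain ⟨h1, h2⟩ := hx
  have hcos : 0 < Real.cos x := Real.cos_pos_of_mem_Ioo ⟨by linarith [pi_pos], h2⟩
  have hsq : Real.sqrt (1 - Real.sin x ^ 2) = Real.cos x := by
    rw [← Real.cos_sq']
    exact Real.sqrt_sq hcos.le
  simp only [smul_eq_mul, hsq, abs_of_pos hcos]
  field_simp

end Aux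

theorem statement_5 (n l : ℕ) (t : ℝ) (ht1 : 0 < t) (ht2 : t ≤ 1) :
    jacobiP (n : ℝ) 0 l (2 * t ^ 2 - 1)
      = (2 * (Nat.factorial l : ℝ) * (Nat.factorial n : ℝ)) /
          (π * (Nat.factorial (l + n) : ℝ)) *
          ∫ v in (0 : ℝ)..1,
            gegenbauerC (2 * l) ((n : ℝ) + 1) (t * v) / Real.sqrt (1 - v ^ 2) := by
  classical
  -- Step 1: compute the integral
  have hgeg : ∀ x : ℝ, gegenbauerC (2*l) ((n:ℝ)+1) (t*x)
      = ∑ k ∈ Finset.range (l+1),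
          (-1:ℝ)^k * (((2*l+n-k).factorial : ℝ)
            / ((n.factorial : ℝ) * (k.factorial : ℝ) * ((2*(l-k)).factorial : ℝ)))
          * ((2*t)^(2*(l-k)) * x^(2*(l-k))) := by
    intro x
    rw [gegenbauerC, show 2*l/2 + 1 = l + 1 by omega]
    refine Finset.sum_congr rfl fun k hk => ?_
    have hkl : k ≤ l := by simpa [Nat.lt_succ_iff] using hk
    have hΓarg : (n:ℝ) + 1 + ((2*l : ℕ) : ℝ) - (k:ℝ) = ((2*l+n-k : ℕ) : ℝ) + 1 := by
      rw [Nat.cast_sub (by omega : k ≤ 2*l+n)]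
      push_cast
      ring
    have hΓ : Real.Gamma ((n:ℝ) + 1 + ((2*l : ℕ) : ℝ) - (k:ℝ)) = ((2*l+n-k).factorial : ℝ) := by
      rw [hΓarg, Real.Gamma_nat_eq_factorial]
    have hΓ0 : Real.Gamma ((n:ℝ) + 1) = (n.factorial : ℝ) := Real.Gamma_nat_eq_factorial n
    have hexp : 2*l - 2*k = 2*(l-k) := by omega
    rw [hΓ, hΓ0, hexp, show (2:ℝ)*(t*x) = (2*t)*x by ring, mul_pow]
  have hint : (∫ v in (0:ℝ)..1, gegenbauerC (2*l) ((n:ℝ)+1) (t*v) / Real.sqrt (1 - v^2))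
      = ∑ k ∈ Finset.range (l+1),
          (-1:ℝ)^k * (((2*l+n-k).factorial : ℝ)
            / ((n.factorial : ℝ) * (k.factorial : ℝ) * ((2*(l-k)).factorial : ℝ)))
          * ((2*t)^(2*(l-k)) * (π/2 * (((2*(l-k)).choose (l-k)) : ℝ) / 4^(l-k))) := by
    rw [show (∫ v in (0:ℝ)..1, gegenbauerC (2*l) ((n:ℝ)+1) (t*v) / Real.sqrt (1 - v^2))
          = ∫ x in (0:ℝ)..(π/2), gegenbauerC (2*l) ((n:ℝ)+1) (t*Real.sin x)
        from subst_sin (fun v => gegenbauerC (2*l) ((n:ℝ)+1) (t*v))]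
    simp only [hgeg]
    rw [intervalIntegral.integral_finset_sum
      (fun k _ => (Continuous.intervalIntegrable (by fun_prop) _ _))]
    refine Finset.sum_congr rfl fun k hk => ?_
    rw [intervalIntegral.integral_const_mul, intervalIntegral.integral_const_mul, wallis]
  rw [hint]
  -- Step 2: expand the Jacobi polynomial
  have hjac : jacobiP (n : ℝ) 0 l (2*t^2 - 1)
      = ∑ k ∈ Finset.range (l+1),
          ((l+n).choose (l-k) : ℝ) * (l.choose k : ℝ) * (t^2-1)^k * (t^2)^(l-k) := by
    rw [jacobiP]
    refine Finset.sum_congr rfl fun k hk => ?_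
    have hkl : k ≤ l := by simpa [Nat.lt_succ_iff] using hk
    have h1 : (l:ℝ) + (n:ℝ) = ((l+n : ℕ) : ℝ) := by push_cast; ring
    have h2 : (l:ℝ) + (0:ℝ) = ((l : ℕ) : ℝ) := by ring
    rw [h1, h2, genBinom_natCast (l+n) (l-k) (by omega), genBinom_natCast l k hkl]
    have e1 : (2*t^2 - 1 - 1)/2 = t^2 - 1 := by ring
    have e2 : (2*t^2 - 1 + 1)/2 = t^2 := by ring
    rw [e1, e2]
  rw [hjac, combin n l (t^2), Finset.mul_sum]
  -- Step 3: termwise identity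
  refine Finset.sum_congr rfl fun k hk => ?_
  have hkl : k ≤ l := by simpa [Nat.lt_succ_iff] using hk
  have r2 : ((l.choose k : ℕ) : ℝ) * (k.factorial : ℝ) * ((l-k).factorial : ℝ)
      = (l.factorial : ℝ) := by
    exact_mod_cast congrArg (Nat.cast (R := ℝ)) (Nat.choose_mul_factorial_mul_factorial hkl)
  have r1 : (((2*l+n-k).choose (l-k) : ℕ) : ℝ) * ((l-k).factorial : ℝ) * ((l+n).factorial : ℝ)
      = ((2*l+n-k).factorial : ℝ) := by
    have h := Nat.choose_mul_factorial_mul_factorial (by omega : l-k ≤ 2*l+n-k)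
    rw [show (2*l+n-k) - (l-k) = l+n by omega] at h
    exact_mod_cast congrArg (Nat.cast (R := ℝ)) h
  have r3 : (((2*(l-k)).choose (l-k) : ℕ) : ℝ) * ((l-k).factorial : ℝ) * ((l-k).factorial : ℝ)
      = ((2*(l-k)).factorial : ℝ) := by
    have h := Nat.choose_mul_factorial_mul_factorial (by omega : l-k ≤ 2*(l-k))
    rw [show (2*(l-k)) - (l-k) = l-k by omega] at h
    exact_mod_cast congrArg (Nat.cast (R := ℝ)) h
  have hp : (2*t)^(2*(l-k)) = 4^(l-k) * (t^2)^(l-k) := by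
    rw [pow_mul, show (2*t)^2 = 4*t^2 by ring, mul_pow]
  rw [hp, ← r1, ← r2, ← r3]
  have hπ : π ≠ 0 := Real.pi_ne_zero
  have hf1 : ((k.factorial : ℕ) : ℝ) ≠ 0 := by positivity
  have hf2 : (((l-k).factorial : ℕ) : ℝ) ≠ 0 := by positivity
  have hf3 : ((n.factorial : ℕ) : ℝ) ≠ 0 := by positivity
  have hf4 : (((l+n).factorial : ℕ) : ℝ) ≠ 0 := by positivity
  have h4 : (4:ℝ)^(l-k) ≠ 0 := by positivity
  have hc3 : (((2*(l-k)).choose (l-k) : ℕ) : ℝ) ≠ 0 := by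
    exact_mod_cast Nat.cast_ne_zero.mpr (Nat.choose_pos (by omega : l-k ≤ 2*(l-k))).ne'
  field_simp
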